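/- Let A be a partially ordered set. Then every nonempty directed subset of A has a least upper bound in A if and only if every nonempty chain in A has a least upper bound in A. -/

import Mathlib

open Set Cardinal

section Aux

variable {A : Type*} [PartialOrder A] {D : Set A}

/-- From directedness, a global choice of upper bounds. -/
lemma aux_exists_ub (hdir : DirectedOn (· ≤ ·) D) :
    ∃ g : A → A → A, ∀ a ∈ D, ∀ b ∈ D, g a b ∈ D ∧ a ≤ g a b ∧ b ≤ g a b := by
  classical
  refine ⟨fun a b =>
    if h : a ∈ D ∧ b ∈ D then (hdir a h.1 b h.2).choose else a, fun a ha b hb => ?_⟩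
  have h : a ∈ D ∧ b ∈ D := ⟨ha, hb⟩
  simp only [dif_pos h]
  obtain ⟨hc, h1, h2⟩ := (hdir a h.1 b h.2).choose_spec
  exact ⟨hc, h1, h2⟩

/-- Every nonempty countable directed set has a LUB, provided every nonempty chain does. -/
lemma aux_countable
    (hC : ∀ C : Set A, C.Nonempty → IsChain (· ≤ ·) C → ∃ a : A, IsLUB C a)
    (hcnt : D.Countable) (hne : D.Nonempty) (hdir : DirectedOn (· ≤ ·) D) :
    ∃ a : A, IsLUB D a := by
  obtain ⟨g, hg⟩ := aux_exists_ub hdir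
  obtain ⟨u, hu⟩ := hcnt.exists_eq_range hne
  -- the cofinal increasing sequence
  let e : ℕ → A := fun n => Nat.rec (u 0) (fun n x => g x (u (n + 1))) n
  have huD : ∀ n, u n ∈ D := fun n => hu ▸ mem_range_self n
  have heD : ∀ n, e n ∈ D := by
    intro n
    induction n with
    | zero => exact huD 0
    | succ n ih => exact (hg _ ih _ (huD (n + 1))).1
  have hue : ∀ n, u n ≤ e n := by
    intro n
    cases n with
    | zero => exact le_rfl
    | succ n => exact (hg _ (heD n) _ (huD (n + 1))).2.2
  have hmono : Monotone e := by
    apply monotone_nat_of_le_succ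
    intro n
    exact (hg _ (heD n) _ (huD (n + 1))).2.1
  obtain ⟨t, ht⟩ := hC (range e) (range_nonempty e) hmono.isChain_range
  refine ⟨t, fun d hd => ?_, fun b hb => ht.2 ?_⟩
  · rw [hu] at hd
    obtain ⟨n, rfl⟩ := hd
    exact (hue n).trans (ht.1 (mem_range_self n))
  · rintro _ ⟨n, rfl⟩
    exact hb (heD n)

/-- A directed "closure" with cardinality control. -/
lemma aux_closure (hdir : DirectedOn (· ≤ ·) D) :
    ∃ cl : Set A → Set A, Monotone cl ∧
      ∀ S, S ⊆ D → S ⊆ cl S ∧ cl S ⊆ D ∧ DirectedOn (· ≤ ·) (cl S) ∧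
        #(cl S) ≤ max #S ℵ₀ := by
  classical
  obtain ⟨g, hg⟩ := aux_exists_ub hdir
  let step : Set A → Set A := fun S => S ∪ image2 g S S
  have hstep_mono : Monotone step := fun S T h =>
    union_subset_union h (image2_subset h h)
  have hstep_incl : ∀ S, S ⊆ step S := fun S => subset_union_left
  have hiter_mono : ∀ n, Monotone (step^[n]) := fun n => by
    induction n with
    | zero => exact monotone_id
    | succ n ih =>
      intro S T h
      rw [Function.iterate_succ_apply, Function.iterate_succ_apply]
      exact ih (hstep_mono h)
  have hiter_incl : ∀ S n, step^[n] S ⊆ step^[n + 1] S := by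
    intro S n
    rw [Function.iterate_succ_apply]
    exact hiter_mono n (hstep_incl S)
  have hiter_le : ∀ S m n, m ≤ n → step^[m] S ⊆ step^[n] S := by
    intro S m n h
    induction h with
    | refl => exact subset_rfl
    | step _ ih => exact ih.trans (hiter_incl S _)
  refine ⟨fun S => ⋃ n : ℕ, step^[n] S, ?_, ?_⟩
  · intro S T h
    exact iUnion_mono fun n => hiter_mono n h
  intro S hSD
  have hstepD : ∀ T, T ⊆ D → step T ⊆ D := by
    intro T hT
    rintro x (hx | hx)
    · exact hT hx
    · obtain ⟨a, ha, b, hb, rfl⟩ := hx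
      exact (hg a (hT ha) b (hT hb)).1
  have hiterD : ∀ n, step^[n] S ⊆ D := by
    intro n
    induction n with
    | zero => exact hSD
    | succ n ih =>
      rw [Function.iterate_succ_apply']
      exact hstepD _ ih
  refine ⟨?_, ?_, ?_, ?_⟩
  · exact subset_iUnion_of_subset 0 subset_rfl
  · exact iUnion_subset hiterD
  · rintro a ha b hb
    obtain ⟨_, ⟨m, rfl⟩, ham⟩ := ha
    obtain ⟨_, ⟨n, rfl⟩, hbn⟩ := hb
    have ham' : a ∈ step^[max m n] S := hiter_le S m _ (le_max_left m n) ham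
    have hbn' : b ∈ step^[max m n] S := hiter_le S n _ (le_max_right m n) hbn
    have haD : a ∈ D := hiterD _ ham'
    have hbD : b ∈ D := hiterD _ hbn'
    refine ⟨g a b, ?_, (hg a haD b hbD).2.1, (hg a haD b hbD).2.2⟩
    refine mem_iUnion.2 ⟨max m n + 1, ?_⟩
    rw [Function.iterate_succ_apply']
    exact Or.inr (mem_image2_of_mem ham' hbn')
  · set m := max #S ℵ₀ with hm
    have hm0 : ℵ₀ ≤ m := le_max_right _ _
    have hiter_card : ∀ n, #(step^[n] S) ≤ m := by
      intro n
      induction n with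
      | zero => exact le_max_left _ _
      | succ n ih =>
        rw [Function.iterate_succ_apply']
        calc #(step (step^[n] S)) ≤ #(step^[n] S) + #(image2 g (step^[n] S) (step^[n] S)) :=
              mk_union_le _ _
          _ ≤ m + m * m := by
              refine add_le_add ih ((mk_image2_le).trans ?_)
              exact mul_le_mul' ih ih
          _ = m := by rw [mul_eq_self hm0, add_eq_self hm0]
    have hUeq : (⋃ n : ℕ, step^[n] S) = ⋃ n : ULift.{_} ℕ, step^[n.down] S := by
      ext x
      simp only [mem_iUnion]
      exact ⟨fun ⟨n, h⟩ => ⟨⟨n⟩, h⟩, fun ⟨n, h⟩ => ⟨n.down, h⟩⟩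
    show #(⋃ n : ℕ, step^[n] S) ≤ m
    rw [hUeq]
    calc #(⋃ n : ULift.{_} ℕ, step^[n.down] S)
        ≤ #(ULift.{_} ℕ) * ⨆ n : ULift.{_} ℕ, #(step^[n.down] S) := mk_iUnion_le _
      _ ≤ ℵ₀ * m := by
          refine mul_le_mul' (by simp) (ciSup_le' fun n => hiter_card n.down)
      _ ≤ m * m := mul_le_mul' hm0 le_rfl
      _ = m := mul_eq_self hm0

/-- The hard direction: chain-completeness implies directed-completeness
(Iwamura / Markowsky). -/
lemma aux_hard
    (hC : ∀ C : Set A, C.Nonempty → IsChain (· ≤ ·) C → ∃ a : A, IsLUB C a) :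
    ∀ D : Set A, D.Nonempty → DirectedOn (· ≤ ·) D → ∃ a : A, IsLUB D a := by
  suffices h : ∀ κ : Cardinal, ∀ D : Set A, #D = κ → D.Nonempty →
      DirectedOn (· ≤ ·) D → ∃ a : A, IsLUB D a from fun D => h _ D rfl
  intro κ
  induction κ using WellFoundedLT.induction with
  | _ κ IH =>
    intro D hκ hne hdir
    by_cases hcnt : D.Countable
    · exact aux_countable hC hcnt hne hdir
    -- uncountable case
    have hκ0 : ℵ₀ < κ := by
      rw [← hκ]
      rw [lt_iff_not_ge]
      intro h
      exact hcnt (le_aleph0_iff_set_countable.mp h)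
    obtain ⟨cl, hcl_mono, hcl⟩ := aux_closure hdir
    obtain ⟨e⟩ : Nonempty (κ.ord.ToType ≃ D) := by
      rw [← Cardinal.eq, mk_ord_toType, hκ]
    -- initial segments and their directed closures
    set S : κ.ord.ToType → Set A := fun i => (fun j => ((e j : D) : A)) '' {j | j ≤ i} with hS
    have hSD : ∀ i, S i ⊆ D := by
      rintro i _ ⟨j, _, rfl⟩
      exact (e j).2
    have hE := fun i => hcl (S i) (hSD i)
    have hEne : ∀ i, (cl (S i)).Nonempty :=
      fun i => ⟨_, (hE i).1 ⟨i, mem_setOf.mpr le_rfl, rfl⟩⟩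
    have hElt : ∀ i, #(cl (S i)) < κ := by
      intro i
      refine lt_of_le_of_lt (hE i).2.2.2 (max_lt ?_ hκ0)
      have h1 : #(S i) ≤ #({j | j ≤ i} : Set κ.ord.ToType) := mk_image_le
      have h2 : #({j | j ≤ i} : Set κ.ord.ToType) < κ := by
        have : ({j | j ≤ i} : Set κ.ord.ToType) = insert i (Iio i) := by
          ext j
          simp [le_iff_lt_or_eq, or_comm]
        rw [this]
        refine lt_of_le_of_lt mk_insert_le ?_
        exact Cardinal.add_lt_of_lt hκ0.le (mk_Iio_ord_toType i) (one_lt_aleph0.trans hκ0)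
      exact lt_of_le_of_lt h1 h2
    -- choose LUBs of the closures by the induction hypothesis
    have hs : ∀ i, ∃ a : A, IsLUB (cl (S i)) a := fun i =>
      IH _ (hκ ▸ hElt i) _ rfl (hEne i) (hE i).2.2.1
    choose s hs using hs
    have hs_mono : Monotone s := by
      intro i j hij
      exact ((hs i).mono (hs j)) (hcl_mono (image_mono fun k hk => hk.trans hij))
    haveI : Nonempty κ.ord.ToType := ⟨e.symm ⟨_, hne.some_mem⟩⟩
    have hchain : IsChain (· ≤ ·) (range s) := by
      rintro _ ⟨i, rfl⟩ _ ⟨j, rfl⟩ _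
      rcases le_total i j with h | h
      · exact Or.inl (hs_mono h)
      · exact Or.inr (hs_mono h)
    obtain ⟨t, ht⟩ := hC (range s) (range_nonempty s) hchain
    refine ⟨t, fun d hd => ?_, fun b hb => ht.2 ?_⟩
    · have : d ∈ cl (S (e.symm ⟨d, hd⟩)) := by
        apply (hE _).1
        refine ⟨e.symm ⟨d, hd⟩, mem_setOf.mpr le_rfl, ?_⟩
        simp
      exact ((hs _).1 this).trans (ht.1 (mem_range_self _))
    · rintro _ ⟨i, rfl⟩
      exact (hs i).2 fun x hx => hb ((hE i).2.1 hx)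

end Aux

/-- In a partially ordered set `A`, every nonempty directed subset has a least upper bound
if and only if every nonempty chain has a least upper bound. -/
theorem stmt_0 {A : Type*} [PartialOrder A] :
    (∀ D : Set A, D.Nonempty → DirectedOn (· ≤ ·) D → ∃ a : A, IsLUB D a) ↔
      (∀ C : Set A, C.Nonempty → IsChain (· ≤ ·) C → ∃ a : A, IsLUB C a) := by
  constructor
  · intro h C hne hch
    exact h C hne hch.directedOn
  · intro hC
    exact aux_hard hC
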